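/- Let n be a real random variable with real-valued characteristic function φ(ω) = E[cos(ωn)] (and E[sin(ωn)] = 0 for all ω), and let p ∈ ℝ, a ∈ ℝ. Then E[exp(p cos(ωn + a))] = I₀(p) + 2 ∑_{k=1}^{∞} I_k(p) φ(kω) cos(ka), where I_k is the modified Bessel function of the first kind. -/

import Mathlib

open Real MeasureTheory

/-- Modified Bessel function of the first kind of integer order `k`,
via the integral representation `I_k(p) = (1/π) ∫₀^π e^{p cos θ} cos(kθ) dθ`. -/
noncomputable def besselI (k : ℕ) (p : ℝ) : ℝ :=
  (1 / π) * ∫ t in (0:ℝ)..π, Real.exp (p * Real.cos t) * Real.cos (k * t)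

open intervalIntegral

lemma sin_part (p : ℝ) (n : ℤ) :
    (∫ x in (0:ℝ)..2*π, Real.exp (p * Real.cos x) * Real.sin (n * x)) = 0 := by
  have h := intervalIntegral.integral_comp_sub_left (a := (0:ℝ)) (b := 2*π)
      (fun x => Real.exp (p * Real.cos x) * Real.sin (n * x)) (2*π)
  have e : ∀ x : ℝ, Real.exp (p * Real.cos (2*π - x)) * Real.sin (n * (2*π - x))
      = -(Real.exp (p * Real.cos x) * Real.sin (n * x)) := by
    intro x
    have h1 : Real.cos (2*π - x) = Real.cos x := by
      rw [Real.cos_sub]; simp [Real.cos_two_pi, Real.sin_two_pi]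
    have h2 : Real.sin (n * (2*π - x)) = - Real.sin (n * x) := by
      have : (n:ℝ) * (2*π - x) = n * (2*π) - n * x := by ring
      rw [this, Real.sin_int_mul_two_pi_sub]
    rw [h1, h2]; ring
  simp only [e, intervalIntegral.integral_neg] at h
  have : (2*π - 2*π : ℝ) = 0 := by ring
  rw [this, sub_zero] at h
  linarith [h]

lemma cos_part (p : ℝ) (n : ℤ) :
    (∫ x in (0:ℝ)..2*π, Real.exp (p * Real.cos x) * Real.cos (n * x)) =
      2 * ∫ x in (0:ℝ)..π, Real.exp (p * Real.cos x) * Real.cos (n * x) := by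
  have cont : Continuous fun x : ℝ => Real.exp (p * Real.cos x) * Real.cos (n * x) := by
    continuity
  have split := intervalIntegral.integral_add_adjacent_intervals
    (a := (0:ℝ)) (b := π) (c := 2*π)
    (cont.intervalIntegrable (μ := volume) 0 π) (cont.intervalIntegrable (μ := volume) π (2*π))
  have h := intervalIntegral.integral_comp_sub_left (a := (0:ℝ)) (b := π)
      (fun x => Real.exp (p * Real.cos x) * Real.cos (n * x)) (2*π)
  have e : ∀ x : ℝ, Real.exp (p * Real.cos (2*π - x)) * Real.cos (n * (2*π - x))
      = Real.exp (p * Real.cos x) * Real.cos (n * x) := by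
    intro x
    have h1 : Real.cos (2*π - x) = Real.cos x := by
      rw [Real.cos_sub]; simp [Real.cos_two_pi, Real.sin_two_pi]
    have h2 : Real.cos (n * (2*π - x)) = Real.cos (n * x) := by
      have : (n:ℝ) * (2*π - x) = n * (2*π) - n * x := by ring
      rw [this, Real.cos_sub]
      simp [Real.cos_int_mul_two_pi]
      rw [show (n:ℝ) * (2*π) = (n:ℝ) * (2*π) from rfl]
      have := Real.sin_int_mul_two_pi_sub (0:ℝ) n
      simp at this
      simp [this]
    rw [h1, h2]
  simp only [e] at h
  have h2π : (2*π - π : ℝ) = π := by ring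
  rw [h2π, show (2*π - 0 : ℝ) = 2*π by ring] at h
  -- h : ∫ 0..π f = ∫ π..2π f
  rw [← split, ← h]; ring

lemma two_pi_pos' : (0:ℝ) < 2*π := by positivity

lemma coeff_eq (p : ℝ) (n : ℤ) :
    fourierCoeffOn two_pi_pos' (fun t => (Real.exp (p * Real.cos t) : ℂ)) n
      = ((besselI n.natAbs p : ℝ) : ℂ) := by
  rw [fourierCoeffOn_eq_integral]
  have key : ∀ x : ℝ, fourier (-n) (x : AddCircle (2*π - 0)) • (Real.exp (p * Real.cos x) : ℂ)
      = ((Real.exp (p * Real.cos x) * Real.cos (n * x) : ℝ) : ℂ)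
        - Complex.I * ((Real.exp (p * Real.cos x) * Real.sin (n * x) : ℝ) : ℂ) := by
    intro x
    rw [smul_eq_mul, fourier_coe_apply]
    have : 2 * ↑π * Complex.I * ↑(-n) * ↑x / ↑(2*π - 0) = ((-(n * x) : ℝ) : ℂ) * Complex.I := by
      have hπ : (π:ℂ) ≠ 0 := by exact_mod_cast Real.pi_ne_zero
      push_cast
      rw [sub_zero]
      field_simp
    rw [this, Complex.exp_mul_I, ← Complex.ofReal_cos, ← Complex.ofReal_sin]
    push_cast
    simp [Real.cos_neg, Real.sin_neg]
    ring
  simp only [key]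
  have contc : Continuous fun x : ℝ => ((Real.exp (p * Real.cos x) * Real.cos (n * x) : ℝ) : ℂ) := by
    continuity
  have conts : Continuous fun x : ℝ => ((Real.exp (p * Real.cos x) * Real.sin (n * x) : ℝ) : ℂ) := by
    continuity
  rw [intervalIntegral.integral_sub (contc.intervalIntegrable (μ := volume) _ _)
    ((conts.intervalIntegrable (μ := volume) _ _).const_mul _)]
  rw [intervalIntegral.integral_const_mul]
  rw [intervalIntegral.integral_ofReal, intervalIntegral.integral_ofReal]
  rw [sin_part, cos_part]
  have habs : ∀ x : ℝ, Real.cos ((n:ℝ) * x) = Real.cos ((n.natAbs : ℝ) * x) := by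
    intro x
    have : ((n.natAbs : ℝ)) = |(n:ℝ)| := by
      simp [Nat.cast_natAbs]
    rw [this]
    rcases abs_cases ((n:ℝ)) with ⟨h, _⟩ | ⟨h, _⟩
    · rw [h]
    · rw [h, show -(n:ℝ) * x = -((n:ℝ)*x) by ring, Real.cos_neg]
  simp only [habs]
  rw [besselI, Complex.real_smul]
  have hπ : (π:ℂ) ≠ 0 := by exact_mod_cast Real.pi_ne_zero
  push_cast
  rw [mul_zero, sub_zero, sub_zero]
  field_simp

section deriv
variable (p : ℝ)

noncomputable def g0 : ℝ → ℂ := fun t => (Real.exp (p * Real.cos t) : ℂ)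
noncomputable def g1 : ℝ → ℂ := fun t =>
  ((-p * Real.sin t) * Real.exp (p * Real.cos t) : ℝ)
noncomputable def g2 : ℝ → ℂ := fun t =>
  ((-p * Real.cos t) * Real.exp (p * Real.cos t)
    + (-p * Real.sin t) * ((-p * Real.sin t) * Real.exp (p * Real.cos t)) : ℝ)

lemma hasDerivAt_r0 (t : ℝ) :
    HasDerivAt (fun t => Real.exp (p * Real.cos t)) ((-p * Real.sin t) * Real.exp (p * Real.cos t)) t := by
  have h1 : HasDerivAt (fun t : ℝ => p * Real.cos t) (-p * Real.sin t) t := by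
    simpa [mul_comm, neg_mul, mul_neg] using (Real.hasDerivAt_cos t).const_mul p
  simpa [mul_comm, Function.comp_def] using (Real.hasDerivAt_exp (p * Real.cos t)).comp t h1

lemma hasDerivAt_g0 (t : ℝ) : HasDerivAt (g0 p) (g1 p t) t :=
  (hasDerivAt_r0 p t).ofReal_comp

lemma hasDerivAt_g1 (t : ℝ) : HasDerivAt (g1 p) (g2 p t) t := by
  have h1 : HasDerivAt (fun t : ℝ => -p * Real.sin t) (-p * Real.cos t) t := by
    simpa [mul_comm] using (Real.hasDerivAt_sin t).const_mul (-p)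
  have := (h1.mul (hasDerivAt_r0 p t))
  exact (this.congr_deriv (by ring)).ofReal_comp

lemma cont_g1 : Continuous (g1 p) := by unfold g1; continuity
lemma cont_g2 : Continuous (g2 p) := by unfold g2; continuity

lemma coeff_ibp {f f' : ℝ → ℂ} (hper : f (2*π) = f 0)
    (hf : ∀ x, HasDerivAt f (f' x) x) (hf' : Continuous f') {n : ℤ} (hn : n ≠ 0) :
    fourierCoeffOn two_pi_pos' f n = 1 / (Complex.I * n) * fourierCoeffOn two_pi_pos' f' n := by
  rw [fourierCoeffOn_of_hasDerivAt two_pi_pos' hn (fun x _ => hf x)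
    (hf'.intervalIntegrable (μ := volume) _ _), hper]
  have hπ : (π:ℂ) ≠ 0 := by exact_mod_cast Real.pi_ne_zero
  have hnn : (n:ℂ) ≠ 0 := by exact_mod_cast hn
  simp only [sub_self, mul_zero, zero_sub]
  push_cast
  rw [sub_zero]
  field_simp

lemma coeff_norm_le (f : ℝ → ℂ) (C : ℝ) (hC : ∀ x, ‖f x‖ ≤ C) (hf : Continuous f) (n : ℤ) :
    ‖fourierCoeffOn two_pi_pos' f n‖ ≤ C := by
  have hC0 : 0 ≤ C := le_trans (norm_nonneg _) (hC 0)
  rw [fourierCoeffOn_eq_integral]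
  rw [norm_smul]
  have h1 : ‖(1 / (2*π - 0) : ℝ)‖ = 1/(2*π) := by
    rw [Real.norm_eq_abs, sub_zero, abs_of_pos (by positivity)]

  rw [h1]
  have h2 : ‖∫ x in (0:ℝ)..2*π, fourier (-n) (x : AddCircle (2*π - 0)) • f x‖
      ≤ C * |2*π - 0| := by
    apply intervalIntegral.norm_integral_le_of_norm_le_const
    intro x _
    rw [norm_smul]
    have : ‖fourier (-n) (x : AddCircle (2*π - 0))‖ = 1 := Circle.norm_coe _
    rw [this, one_mul]
    exact hC x
  calc 1/(2*π) * ‖∫ x in (0:ℝ)..2*π, fourier (-n) (x : AddCircle (2*π - 0)) • f x‖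
      ≤ 1/(2*π) * (C * |2*π - 0|) := by
        apply mul_le_mul_of_nonneg_left h2 (by positivity)
    _ = C := by
        rw [sub_zero, abs_of_pos two_pi_pos']
        field_simp
end deriv

section summ
variable (p : ℝ)

lemma g0_per : g0 p (2*π) = g0 p 0 := by simp [g0]

lemma g1_per : g1 p (2*π) = g1 p 0 := by simp [g1]

lemma norm_g2_le (t : ℝ) : ‖g2 p t‖ ≤ (|p| + p^2) * Real.exp |p| := by
  have hexp : Real.exp (p * Real.cos t) ≤ Real.exp |p| := by
    apply Real.exp_le_exp.mpr
    calc p * Real.cos t ≤ |p * Real.cos t| := le_abs_self _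
      _ = |p| * |Real.cos t| := abs_mul _ _
      _ ≤ |p| * 1 := mul_le_mul_of_nonneg_left (Real.abs_cos_le_one t) (abs_nonneg p)
      _ = |p| := mul_one _
  have hexp0 : (0:ℝ) < Real.exp (p * Real.cos t) := Real.exp_pos _
  have h1 : g2 p t = ((((-p * Real.cos t) + (p * Real.sin t)^2) * Real.exp (p * Real.cos t) : ℝ) : ℂ) := by
    unfold g2; norm_cast; ring_nf
  rw [h1, Complex.norm_real, Real.norm_eq_abs, abs_mul, abs_of_pos hexp0]
  have h2 : |(-p * Real.cos t) + (p * Real.sin t)^2| ≤ |p| + p^2 := by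
    have := abs_add_le (-p * Real.cos t) ((p * Real.sin t)^2)
    have hc : |(-p) * Real.cos t| ≤ |p| := by
      rw [abs_mul, abs_neg]
      calc |p| * |Real.cos t| ≤ |p| * 1 :=
          mul_le_mul_of_nonneg_left (Real.abs_cos_le_one t) (abs_nonneg p)
        _ = |p| := mul_one _
    have hs : |(p * Real.sin t)^2| ≤ p^2 := by
      rw [abs_of_nonneg (sq_nonneg _), mul_pow]
      nlinarith [Real.sin_sq_le_one t, sq_nonneg p]
    calc |(-p * Real.cos t) + (p * Real.sin t)^2|
        ≤ |(-p) * Real.cos t| + |(p * Real.sin t)^2| := abs_add_le _ _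
      _ ≤ |p| + p^2 := add_le_add hc hs
  exact mul_le_mul h2 hexp (le_of_lt hexp0) (by positivity)

lemma coeff_g0_bound {n : ℤ} (hn : n ≠ 0) :
    ‖fourierCoeffOn two_pi_pos' (g0 p) n‖ ≤ ((|p| + p^2) * Real.exp |p|) / (n:ℝ)^2 := by
  have h1 := coeff_ibp (g0_per p) (hasDerivAt_g0 p) (cont_g1 p) hn
  have h2 := coeff_ibp (g1_per p) (hasDerivAt_g1 p) (cont_g2 p) hn
  rw [h1, h2]
  have hb := coeff_norm_le (g2 p) ((|p| + p^2) * Real.exp |p|) (norm_g2_le p) (cont_g2 p) n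
  have hnormI : ‖(1 / (Complex.I * n) : ℂ)‖ = 1 / |(n:ℝ)| := by
    rw [norm_div, norm_mul, Complex.norm_I, one_mul, norm_one]
    congr 1
    rw [← Complex.ofReal_intCast, Complex.norm_real, Real.norm_eq_abs]
  rw [norm_mul, norm_mul, hnormI]
  have hC0 : (0:ℝ) ≤ (|p| + p^2) * Real.exp |p| := by positivity
  have habs : (0:ℝ) < |(n:ℝ)| := by
    simp only [abs_pos]
    exact_mod_cast hn
  calc 1/|(n:ℝ)| * (1/|(n:ℝ)| * ‖fourierCoeffOn two_pi_pos' (g2 p) n‖)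
      ≤ 1/|(n:ℝ)| * (1/|(n:ℝ)| * ((|p| + p^2) * Real.exp |p|)) := by
        apply mul_le_mul_of_nonneg_left _ (by positivity)
        exact mul_le_mul_of_nonneg_left hb (by positivity)
    _ = ((|p| + p^2) * Real.exp |p|) / (n:ℝ)^2 := by
        rw [div_mul_eq_mul_div, one_mul, div_mul_eq_mul_div, one_mul, div_div, ← sq, sq_abs]

lemma summable_coeff : Summable (fun n : ℤ => fourierCoeffOn two_pi_pos' (g0 p) n) := by
  set C := (|p| + p^2) * Real.exp |p| with hC
  have hC0 : (0:ℝ) ≤ C := by positivity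
  have hs : Summable (fun k : ℕ => C / (k:ℝ)^2) := by
    have := (Real.summable_one_div_nat_pow (p := 2)).mpr (by norm_num)
    simpa [div_eq_mul_inv, mul_comm] using this.mul_left C
  have hshift : Summable (fun k : ℕ => C / ((k+1:ℕ):ℝ)^2) := by
    exact_mod_cast (summable_nat_add_iff 1).mpr hs
  apply Summable.of_norm
  apply Summable.of_nat_of_neg
  · apply (summable_nat_add_iff 1).mp
    apply Summable.of_nonneg_of_le (fun k => norm_nonneg _) _ hshift
    intro k
    have := coeff_g0_bound p (n := (k+1 : ℕ)) (by positivity)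
    calc ‖fourierCoeffOn two_pi_pos' (g0 p) ((k+1 : ℕ) : ℤ)‖
        ≤ C / (((k+1:ℕ):ℤ):ℝ)^2 := this
      _ = C / ((k+1:ℕ):ℝ)^2 := by norm_num
  · apply (summable_nat_add_iff 1).mp
    apply Summable.of_nonneg_of_le (fun k => norm_nonneg _) _ hshift
    intro k
    have hne : (-(k+1:ℕ) : ℤ) ≠ 0 := by
      omega
    have := coeff_g0_bound p (n := -(k+1:ℕ)) hne
    calc ‖fourierCoeffOn two_pi_pos' (g0 p) (-(k+1:ℕ) : ℤ)‖
        ≤ C / ((-(k+1:ℕ) : ℤ):ℝ)^2 := this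
      _ = C / ((k+1:ℕ):ℝ)^2 := by push_cast; ring_nf
end summ

instance fact_two_pi : Fact ((0:ℝ) < 2*π) := ⟨two_pi_pos'⟩

section pointwise
variable (p : ℝ)

lemma g0_periodic : Function.Periodic (g0 p) (2*π) := by
  intro x; simp [g0, Real.cos_add_two_pi]

lemma cont_g0 : Continuous (g0 p) := by unfold g0; continuity

noncomputable def G : C(AddCircle (2*π), ℂ) :=
  ⟨(g0_periodic p).lift, continuous_coinduced_dom.mpr (by
    show Continuous ((g0_periodic p).lift ∘ ((↑) : ℝ → AddCircle (2*π)))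
    have : (g0_periodic p).lift ∘ ((↑) : ℝ → AddCircle (2*π)) = g0 p := by
      funext x; exact (g0_periodic p).lift_coe x
    rw [this]; exact cont_g0 p)⟩

lemma G_coe (x : ℝ) : G p (x : AddCircle (2*π)) = g0 p x := (g0_periodic p).lift_coe x

lemma fourierCoeff_G (n : ℤ) :
    fourierCoeff (⇑(G p)) n = fourierCoeffOn two_pi_pos' (g0 p) n := by
  rw [fourierCoeff_eq_intervalIntegral _ n 0, fourierCoeffOn_eq_integral]
  rw [zero_add]
  congr 1
  · norm_num
  · apply intervalIntegral.integral_congr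
    intro x _
    simp only [G_coe]
    congr 1
    rw [fourier_coe_apply, fourier_coe_apply]
    norm_num

lemma fourierCoeff_G_eq (n : ℤ) :
    fourierCoeff (⇑(G p)) n = ((besselI n.natAbs p : ℝ) : ℂ) := by
  rw [fourierCoeff_G]
  unfold g0
  exact coeff_eq p n

lemma hasSum_pointwise (u : ℝ) :
    HasSum (fun k : ℕ => 2 * besselI (k+1) p * Real.cos ((k+1) * u))
      (Real.exp (p * Real.cos u) - besselI 0 p) := by
  have hsum : Summable (fourierCoeff (⇑(G p))) := by
    have : fourierCoeff (⇑(G p)) = fun n => fourierCoeffOn two_pi_pos' (g0 p) n :=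
      funext fun n => fourierCoeff_G p n
    rw [this]; exact summable_coeff p
  have H := has_pointwise_sum_fourier_series_of_summable hsum (u : AddCircle (2*π))
  simp only [fourierCoeff_G_eq, G_coe] at H
  -- H : HasSum (fun i : ℤ => ((besselI i.natAbs p : ℝ):ℂ) • fourier i ↑u) (g0 p u)
  have H2 := H.nat_add_neg
  have hterm : ∀ k : ℕ,
      (((besselI (k:ℤ).natAbs p : ℝ):ℂ) • fourier (k:ℤ) ((u : ℝ) : AddCircle (2*π))
        + ((besselI (-(k:ℤ)).natAbs p : ℝ):ℂ) • fourier (-(k:ℤ)) ((u : ℝ) : AddCircle (2*π)))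
      = ((2 * besselI k p * Real.cos (k * u) : ℝ) : ℂ) := by
    intro k
    have hnab : ((-(k:ℤ)).natAbs) = k := by simp
    have hnab2 : ((k:ℤ).natAbs) = k := by simp
    rw [hnab, hnab2]
    rw [smul_eq_mul, smul_eq_mul, ← mul_add]
    have hf1 : fourier (k:ℤ) ((u : ℝ) : AddCircle (2*π)) = Complex.exp (((k * u : ℝ):ℂ) * Complex.I) := by
      rw [fourier_coe_apply]
      congr 1
      have hπ : (π:ℂ) ≠ 0 := by exact_mod_cast Real.pi_ne_zero
      push_cast
      field_simp
    have hf2 : fourier (-(k:ℤ)) ((u : ℝ) : AddCircle (2*π)) = Complex.exp (((-(k * u) : ℝ):ℂ) * Complex.I) := by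
      rw [fourier_coe_apply]
      congr 1
      have hπ : (π:ℂ) ≠ 0 := by exact_mod_cast Real.pi_ne_zero
      push_cast
      field_simp
    rw [hf1, hf2, Complex.exp_mul_I, Complex.exp_mul_I]
    rw [← Complex.ofReal_cos, ← Complex.ofReal_sin, ← Complex.ofReal_cos, ← Complex.ofReal_sin]
    rw [Real.cos_neg, Real.sin_neg]
    push_cast
    ring
  simp only [hterm] at H2
  have hzero : ((2 * besselI 0 p * Real.cos ((0:ℕ) * u) : ℝ) : ℂ)
      = 2 * ((besselI 0 p : ℝ) : ℂ) := by
    push_cast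
    norm_num
  have hf0 : ((besselI (0:ℤ).natAbs p : ℝ):ℂ) • fourier (0:ℤ) ((u : ℝ) : AddCircle (2*π))
      = ((besselI 0 p : ℝ) : ℂ) := by
    rw [fourier_zero, smul_eq_mul, mul_one]
    norm_num
  rw [hf0] at H2
  -- H2 : HasSum (fun k:ℕ => ↑(2 I_k cos(k u))) (↑(g0) + ↑I₀)
  have H3 := (hasSum_nat_add_iff' (f := fun k : ℕ => ((2 * besselI k p * Real.cos (k * u) : ℝ) : ℂ)) 1).mpr H2
  simp only [Finset.range_one, Finset.sum_singleton] at H3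
  rw [hzero] at H3
  have hval : g0 p u + ((besselI 0 p : ℝ) : ℂ) - 2 * ((besselI 0 p : ℝ) : ℂ)
      = ((Real.exp (p * Real.cos u) - besselI 0 p : ℝ) : ℂ) := by
    unfold g0
    push_cast
    ring
  rw [hval] at H3
  have H4 := (Complex.reCLM : ℂ →L[ℝ] ℝ).hasSum H3
  simp only [Complex.reCLM_apply, Complex.ofReal_re] at H4
  convert H4 using 2 with k
  push_cast
  ring_nf
end pointwise

lemma summable_coeff_norm (p : ℝ) :
    Summable (fun n : ℤ => ‖fourierCoeffOn two_pi_pos' (g0 p) n‖) := by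
  set C := (|p| + p^2) * Real.exp |p| with hC
  have hC0 : (0:ℝ) ≤ C := by positivity
  have hs : Summable (fun k : ℕ => C / (k:ℝ)^2) := by
    have := (Real.summable_one_div_nat_pow (p := 2)).mpr (by norm_num)
    simpa [div_eq_mul_inv, mul_comm] using this.mul_left C
  have hshift : Summable (fun k : ℕ => C / ((k+1:ℕ):ℝ)^2) := by
    exact_mod_cast (summable_nat_add_iff 1).mpr hs
  apply Summable.of_nat_of_neg
  · apply (summable_nat_add_iff 1).mp
    apply Summable.of_nonneg_of_le (fun k => norm_nonneg _) _ hshift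
    intro k
    have := coeff_g0_bound p (n := (k+1 : ℕ)) (by positivity)
    calc ‖fourierCoeffOn two_pi_pos' (g0 p) ((k+1 : ℕ) : ℤ)‖
        ≤ C / (((k+1:ℕ):ℤ):ℝ)^2 := this
      _ = C / ((k+1:ℕ):ℝ)^2 := by norm_num
  · apply (summable_nat_add_iff 1).mp
    apply Summable.of_nonneg_of_le (fun k => norm_nonneg _) _ hshift
    intro k
    have hne : (-(k+1:ℕ) : ℤ) ≠ 0 := by omega
    have := coeff_g0_bound p (n := -(k+1:ℕ)) hne
    calc ‖fourierCoeffOn two_pi_pos' (g0 p) (-(k+1:ℕ) : ℤ)‖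
        ≤ C / ((-(k+1:ℕ) : ℤ):ℝ)^2 := this
      _ = C / ((k+1:ℕ):ℝ)^2 := by push_cast; ring_nf

lemma summable_bessel (p : ℝ) : Summable (fun k : ℕ => |2 * besselI (k+1) p|) := by
  have h1 : Summable (fun k : ℕ => ‖fourierCoeffOn two_pi_pos' (g0 p) ((k:ℤ))‖) :=
    (summable_coeff_norm p).comp_injective (fun a b h => by exact_mod_cast h)
  have h2 := (summable_nat_add_iff 1).mpr h1
  apply Summable.of_nonneg_of_le (fun k => abs_nonneg _) _ (h2.mul_left 2)
  intro k
  have hcoeff : fourierCoeffOn two_pi_pos' (g0 p) ((k+1 : ℕ) : ℤ)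
      = ((besselI (k+1) p : ℝ) : ℂ) := by
    unfold g0
    rw [coeff_eq]
    congr 2
  rw [abs_mul, abs_two]
  apply mul_le_mul_of_nonneg_left _ (by norm_num : (0:ℝ) ≤ 2)
  rw [← Real.norm_eq_abs, ← Complex.norm_real, ← hcoeff]


lemma integrable_cos_mul (μ : Measure ℝ) [IsProbabilityMeasure μ] (c : ℝ) :
    Integrable (fun x => Real.cos (c * x)) μ := by
  apply (integrable_const (1:ℝ)).mono' (Continuous.aestronglyMeasurable (by continuity))
  filter_upwards with x
  rw [Real.norm_eq_abs]
  exact Real.abs_cos_le_one _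

lemma integrable_sin_mul (μ : Measure ℝ) [IsProbabilityMeasure μ] (c : ℝ) :
    Integrable (fun x => Real.sin (c * x)) μ := by
  apply (integrable_const (1:ℝ)).mono' (Continuous.aestronglyMeasurable (by continuity))
  filter_upwards with x
  rw [Real.norm_eq_abs]
  exact Real.abs_sin_le_one _

theorem stmt15 (μ : Measure ℝ) [IsProbabilityMeasure μ]
    (φ : ℝ → ℝ)
    (hφ : ∀ ω, φ ω = ∫ x, Real.cos (ω * x) ∂μ)
    (hreal : ∀ ω, (∫ x, Real.sin (ω * x) ∂μ) = 0)
    (p a ω : ℝ) :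
    HasSum (fun k : ℕ => 2 * besselI (k + 1) p * φ ((k + 1) * ω) * Real.cos ((k + 1) * a))
      ((∫ x, Real.exp (p * Real.cos (ω * x + a)) ∂μ) - besselI 0 p) := by
  -- the series of integrals
  have key : HasSum
      (fun k : ℕ => ∫ x, 2 * besselI (k+1) p * Real.cos ((k+1 : ℕ) * (ω * x + a)) ∂μ)
      (∫ x, (Real.exp (p * Real.cos (ω * x + a)) - besselI 0 p) ∂μ) := by
    apply MeasureTheory.hasSum_integral_of_dominated_convergence
      (bound := fun k _ => |2 * besselI (k+1) p|)
    · intro k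
      apply Continuous.aestronglyMeasurable
      continuity
    · intro k
      filter_upwards with x
      rw [Real.norm_eq_abs, abs_mul]
      calc |2 * besselI (k+1) p| * |Real.cos ((k+1 : ℕ) * (ω * x + a))|
          ≤ |2 * besselI (k+1) p| * 1 :=
            mul_le_mul_of_nonneg_left (Real.abs_cos_le_one _) (abs_nonneg _)
        _ = |2 * besselI (k+1) p| := mul_one _
    · filter_upwards with x
      exact summable_bessel p
    · exact integrable_const _
    · filter_upwards with x
      exact_mod_cast hasSum_pointwise p (ω * x + a)
  -- integrability of the exponential
  have hexp_int : Integrable (fun x => Real.exp (p * Real.cos (ω * x + a))) μ := by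
    apply (integrable_const (Real.exp |p|)).mono' (Continuous.aestronglyMeasurable (by continuity))
    filter_upwards with x
    rw [Real.norm_eq_abs, abs_of_pos (Real.exp_pos _)]
    apply Real.exp_le_exp.mpr
    calc p * Real.cos (ω * x + a) ≤ |p * Real.cos (ω * x + a)| := le_abs_self _
      _ = |p| * |Real.cos (ω * x + a)| := abs_mul _ _
      _ ≤ |p| * 1 := mul_le_mul_of_nonneg_left (Real.abs_cos_le_one _) (abs_nonneg p)
      _ = |p| := mul_one _
  have hval : (∫ x, (Real.exp (p * Real.cos (ω * x + a)) - besselI 0 p) ∂μ)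
      = (∫ x, Real.exp (p * Real.cos (ω * x + a)) ∂μ) - besselI 0 p := by
    rw [integral_sub hexp_int (integrable_const _), MeasureTheory.integral_const]
    simp
  rw [hval] at key
  -- compute each integral
  have hterm : ∀ k : ℕ,
      (∫ x, 2 * besselI (k+1) p * Real.cos ((k+1 : ℕ) * (ω * x + a)) ∂μ)
      = 2 * besselI (k + 1) p * φ ((k + 1) * ω) * Real.cos ((k + 1) * a) := by
    intro k
    set c : ℝ := ((k:ℝ) + 1)
    have hc : ((k+1 : ℕ) : ℝ) = c := by push_cast; rfl
    have expand : ∀ x : ℝ,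
        2 * besselI (k+1) p * Real.cos ((k+1 : ℕ) * (ω * x + a))
        = (2 * besselI (k+1) p * Real.cos (c * a)) * Real.cos ((c * ω) * x)
          - (2 * besselI (k+1) p * Real.sin (c * a)) * Real.sin ((c * ω) * x) := by
      intro x
      rw [hc]
      have : c * (ω * x + a) = (c * ω) * x + c * a := by ring
      rw [this, Real.cos_add]
      ring
    simp only [expand]
    rw [integral_sub ((integrable_cos_mul μ (c * ω)).const_mul _)
      ((integrable_sin_mul μ (c * ω)).const_mul _)]
    rw [MeasureTheory.integral_const_mul, MeasureTheory.integral_const_mul, hreal, hφ]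
    ring
  simpa only [funext hterm] using key
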